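/- Eigenvector rigidity from the FMI: let ζ₀ with |ζ₀| < 1 be an eigenvalue of T with eigenvector x₀ (Tx₀ = ζ₀x₀), and suppose s satisfies the FMI, i.e., for all x ∈ X, ℓ ∈ L, |ζ|<1, the 2×2 matrix [[D((I-conj(ζ)T)x, (I-conj(ζ)T)x), ⟨ℓ, (E - s(ζ)*M)x⟩], [⟨(E - s(ζ)*M)x, ℓ⟩, ⟨(I - s(ζ)*s(ζ))/(1-|ζ|²) ℓ, ℓ⟩]] is positive semidefinite. Then s(ζ₀)Ex₀ = Mx₀. -/

import Mathlib

open scoped InnerProductSpace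

set_option synthInstance.maxHeartbeats 1000000 in
set_option maxHeartbeats 1000000 in
/-- Eigenvector rigidity from Potapov's Fundamental Matrix Inequality: if `ζ₀`, `|ζ₀| < 1`,
is an eigenvalue of `T` with eigenvector `x₀`, and `s` satisfies the FMI (for all `x`, `ℓ`
and `|ζ| < 1` the 2×2 matrix
`[[D((I-ζ̄T)x,(I-ζ̄T)x), ⟨ℓ,(E-s(ζ)*M)x⟩],[⟨(E-s(ζ)*M)x,ℓ⟩, ⟨(I-s(ζ)*s(ζ))ℓ,ℓ⟩/(1-|ζ|²)]]`
is positive semidefinite), then `s(ζ₀)Ex₀ = Mx₀`. -/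
theorem fmi_eigenvector_rigidity
    (X : Type*) [AddCommGroup X] [Module ℂ X]
    (L L' : Type*) [NormedAddCommGroup L] [InnerProductSpace ℂ L] [CompleteSpace L]
    [NormedAddCommGroup L'] [InnerProductSpace ℂ L'] [CompleteSpace L']
    (D : X →ₗ⋆[ℂ] X →ₗ[ℂ] ℂ)
    (hherm : ∀ x y : X, (starRingEnd ℂ) (D x y) = D y x)
    (hpos : ∀ x : X, 0 ≤ (D x x).re)
    (T : X →ₗ[ℂ] X) (E : X →ₗ[ℂ] L) (M : X →ₗ[ℂ] L')
    (hFI : ∀ x y : X, D x y - D (T x) (T y) = ⟪E x, E y⟫_ℂ - ⟪M x, M y⟫_ℂ)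
    (s : ℂ → (L →L[ℂ] L')) (hs : ∀ ζ : ℂ, ‖ζ‖ < 1 → ‖s ζ‖ ≤ 1)
    (hFMI : ∀ (x : X) (ℓ : L) (ζ : ℂ), ‖ζ‖ < 1 → ∀ c₁ c₂ : ℂ,
      0 ≤ ((starRingEnd ℂ) c₁ * c₁
              * D (x - (starRingEnd ℂ) ζ • T x) (x - (starRingEnd ℂ) ζ • T x)
            + (starRingEnd ℂ) c₁ * c₂
              * ⟪E x - ContinuousLinearMap.adjoint (s ζ) (M x), ℓ⟫_ℂ
            + (starRingEnd ℂ) c₂ * c₁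
              * ⟪ℓ, E x - ContinuousLinearMap.adjoint (s ζ) (M x)⟫_ℂ
            + (starRingEnd ℂ) c₂ * c₂
              * ((⟪ℓ, ℓ⟫_ℂ - ⟪s ζ ℓ, s ζ ℓ⟫_ℂ) / (1 - (starRingEnd ℂ) ζ * ζ))).re)
    (ζ₀ : ℂ) (hζ₀ : ‖ζ₀‖ < 1) (x₀ : X) (heig : T x₀ = ζ₀ • x₀) :
    s ζ₀ (E x₀) = M x₀ := by
  -- abbreviations (plain `have`s, no folding)
  have hKpos : (0:ℝ) < 1 - ‖ζ₀‖ ^ 2 := by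
    have h0 : 0 ≤ ‖ζ₀‖ := norm_nonneg _
    nlinarith
  have hκ : (starRingEnd ℂ) ζ₀ * ζ₀ = ((‖ζ₀‖ ^ 2 : ℝ) : ℂ) := by
    rw [mul_comm, Complex.mul_conj, ← Complex.sq_norm]
  have hκ' : 1 - (starRingEnd ℂ) ζ₀ * ζ₀ = (((1 - ‖ζ₀‖ ^ 2 : ℝ)) : ℂ) := by
    rw [hκ]; push_cast; ring
  have hK0 : (((1 - ‖ζ₀‖ ^ 2 : ℝ)) : ℂ) ≠ 0 :=
    Complex.ofReal_ne_zero.mpr (ne_of_gt hKpos)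
  have hEE : ⟪E x₀, E x₀⟫_ℂ = ((‖E x₀‖ ^ 2 : ℝ) : ℂ) := by
    exact_mod_cast inner_self_eq_norm_sq_to_K (𝕜 := ℂ) (E x₀)
  have hMM : ⟪M x₀, M x₀⟫_ℂ = ((‖M x₀‖ ^ 2 : ℝ) : ℂ) := by
    exact_mod_cast inner_self_eq_norm_sq_to_K (𝕜 := ℂ) (M x₀)
  have hSS : ⟪s ζ₀ (E x₀), s ζ₀ (E x₀)⟫_ℂ = ((‖s ζ₀ (E x₀)‖ ^ 2 : ℝ) : ℂ) := by
    exact_mod_cast inner_self_eq_norm_sq_to_K (𝕜 := ℂ) (s ζ₀ (E x₀))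
  -- eigenvector relation
  have hx : x₀ - (starRingEnd ℂ) ζ₀ • T x₀ = (((1 - ‖ζ₀‖ ^ 2 : ℝ)) : ℂ) • x₀ := by
    rw [heig, smul_smul, hκ, ← hκ', sub_smul, one_smul, hκ]
  -- value of the (1,1) entry
  have hD11 : D (x₀ - (starRingEnd ℂ) ζ₀ • T x₀) (x₀ - (starRingEnd ℂ) ζ₀ • T x₀)
      = ((((1 - ‖ζ₀‖ ^ 2) ^ 2 : ℝ)) : ℂ) * D x₀ x₀ := by
    rw [hx]
    simp only [map_smulₛₗ, LinearMap.smul_apply, map_smul, smul_eq_mul,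
      Complex.conj_ofReal, RingHom.id_apply]
    push_cast; ring
  -- the fundamental identity at x₀
  have hFI0 : (1 - ‖ζ₀‖ ^ 2) * (D x₀ x₀).re = ‖E x₀‖ ^ 2 - ‖M x₀‖ ^ 2 := by
    have h1 := hFI x₀ x₀
    rw [heig] at h1
    simp only [map_smulₛₗ, LinearMap.smul_apply, map_smul, smul_eq_mul,
      RingHom.id_apply, hEE, hMM] at h1
    push_cast at h1
    have h2 : (((1 - ‖ζ₀‖ ^ 2 : ℝ)) : ℂ) * D x₀ x₀
        = ((‖E x₀‖ ^ 2 - ‖M x₀‖ ^ 2 : ℝ) : ℂ) := by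
      rw [← hκ']
      push_cast
      linear_combination h1
    have h3 := congrArg Complex.re h2
    rw [Complex.re_ofReal_mul, Complex.ofReal_re] at h3
    exact h3
  have hem : ‖M x₀‖ ^ 2 ≤ ‖E x₀‖ ^ 2 := by nlinarith [hpos x₀]
  -- contraction
  have hsee : ‖s ζ₀ (E x₀)‖ ^ 2 ≤ ‖E x₀‖ ^ 2 := by
    have h1 : ‖s ζ₀ (E x₀)‖ ≤ ‖s ζ₀‖ * ‖E x₀‖ := (s ζ₀).le_opNorm _
    have h2 : ‖s ζ₀‖ ≤ 1 := hs ζ₀ hζ₀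
    have h3 : ‖s ζ₀ (E x₀)‖ ≤ ‖E x₀‖ := by
      refine le_trans h1 ?_
      have := mul_le_mul_of_nonneg_right h2 (norm_nonneg (E x₀))
      simpa using this
    nlinarith [norm_nonneg (s ζ₀ (E x₀))]
  -- the off-diagonal entry
  set b : ℂ := ⟪E x₀ - ContinuousLinearMap.adjoint (s ζ₀) (M x₀), E x₀⟫_ℂ with hbdef
  have hbb : b * (starRingEnd ℂ) b = ((Complex.normSq b : ℝ) : ℂ) := Complex.mul_conj b
  -- the quadratic inequality from the FMI
  have hquad : ∀ t : ℝ, 0 ≤ ((1 - ‖ζ₀‖ ^ 2) ^ 2 * (D x₀ x₀).re) * (t * t)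
      + (-(2 * Complex.normSq b)) * t
      + Complex.normSq b * (‖E x₀‖ ^ 2 - ‖s ζ₀ (E x₀)‖ ^ 2) / (1 - ‖ζ₀‖ ^ 2) := by
    intro t
    have h2 := hFMI x₀ (E x₀) ζ₀ hζ₀ ((t : ℝ) : ℂ) (-(starRingEnd ℂ) b)
    rw [← hbdef] at h2
    have hcomplex :
        (starRingEnd ℂ) ((t : ℝ) : ℂ) * ((t : ℝ) : ℂ)
            * D (x₀ - (starRingEnd ℂ) ζ₀ • T x₀) (x₀ - (starRingEnd ℂ) ζ₀ • T x₀)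
          + (starRingEnd ℂ) ((t : ℝ) : ℂ) * (-(starRingEnd ℂ) b) * b
          + (starRingEnd ℂ) (-(starRingEnd ℂ) b) * ((t : ℝ) : ℂ)
            * ⟪E x₀, E x₀ - ContinuousLinearMap.adjoint (s ζ₀) (M x₀)⟫_ℂ
          + (starRingEnd ℂ) (-(starRingEnd ℂ) b) * (-(starRingEnd ℂ) b)
            * ((⟪E x₀, E x₀⟫_ℂ - ⟪s ζ₀ (E x₀), s ζ₀ (E x₀)⟫_ℂ)
                / (1 - (starRingEnd ℂ) ζ₀ * ζ₀))
        = (((t * t) * (1 - ‖ζ₀‖ ^ 2) ^ 2 : ℝ) : ℂ) * D x₀ x₀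
          + (((-(2 * t * Complex.normSq b))
              + Complex.normSq b * (‖E x₀‖ ^ 2 - ‖s ζ₀ (E x₀)‖ ^ 2) / (1 - ‖ζ₀‖ ^ 2)
                : ℝ) : ℂ) := by
      rw [hD11, hκ', ← inner_conj_symm (E x₀)
        (E x₀ - ContinuousLinearMap.adjoint (s ζ₀) (M x₀)), ← hbdef, map_neg,
        Complex.conj_conj, Complex.conj_ofReal, hEE, hSS]
      push_cast
      linear_combination (((‖E x₀‖ : ℂ) ^ 2 - (‖s ζ₀ (E x₀)‖ : ℂ) ^ 2)
        / (1 - (‖ζ₀‖ : ℂ) ^ 2) - 2 * (t : ℂ)) * hbb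
    rw [hcomplex] at h2
    rw [Complex.add_re, Complex.re_ofReal_mul, Complex.ofReal_re] at h2
    linarith
  -- discriminant
  have hdisc := discrim_le_zero hquad
  rw [discrim] at hdisc
  have hnb : Complex.normSq b ≤ (‖E x₀‖ ^ 2 - ‖M x₀‖ ^ 2) * (‖E x₀‖ ^ 2 - ‖s ζ₀ (E x₀)‖ ^ 2) := by
    rcases eq_or_lt_of_le (Complex.normSq_nonneg b) with h | h
    · rw [← h]
      have := hpos x₀
      nlinarith
    · have h4 : Complex.normSq b ^ 2
          ≤ (1 - ‖ζ₀‖ ^ 2) * (D x₀ x₀).re * (‖E x₀‖ ^ 2 - ‖s ζ₀ (E x₀)‖ ^ 2)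
            * Complex.normSq b := by
        have hKne : (1 - ‖ζ₀‖ ^ 2 : ℝ) ≠ 0 := ne_of_gt hKpos
        have hK2 : ((1 - ‖ζ₀‖ ^ 2 : ℝ)) ^ 2 / (1 - ‖ζ₀‖ ^ 2) = 1 - ‖ζ₀‖ ^ 2 := by
          rw [sq, mul_div_assoc, div_self hKne, mul_one]
        have hfold : (1 - ‖ζ₀‖ ^ 2 : ℝ) ^ 2 * (D x₀ x₀).re
            * (Complex.normSq b * (‖E x₀‖ ^ 2 - ‖s ζ₀ (E x₀)‖ ^ 2) / (1 - ‖ζ₀‖ ^ 2))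
            = (1 - ‖ζ₀‖ ^ 2) * (D x₀ x₀).re * (‖E x₀‖ ^ 2 - ‖s ζ₀ (E x₀)‖ ^ 2)
              * Complex.normSq b := by
          calc (1 - ‖ζ₀‖ ^ 2 : ℝ) ^ 2 * (D x₀ x₀).re
              * (Complex.normSq b * (‖E x₀‖ ^ 2 - ‖s ζ₀ (E x₀)‖ ^ 2) / (1 - ‖ζ₀‖ ^ 2))
              = ((1 - ‖ζ₀‖ ^ 2 : ℝ) ^ 2 / (1 - ‖ζ₀‖ ^ 2))
                * ((D x₀ x₀).re * (Complex.normSq b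
                    * (‖E x₀‖ ^ 2 - ‖s ζ₀ (E x₀)‖ ^ 2))) := by ring
            _ = (1 - ‖ζ₀‖ ^ 2) * (D x₀ x₀).re * (‖E x₀‖ ^ 2 - ‖s ζ₀ (E x₀)‖ ^ 2)
                * Complex.normSq b := by rw [hK2]; ring
        nlinarith [hdisc, hfold]
      rw [hFI0] at h4
      exact le_of_mul_le_mul_right (by nlinarith [h4]) h
  -- real part of b
  have hbre : b.re = ‖E x₀‖ ^ 2 - (⟪M x₀, s ζ₀ (E x₀)⟫_ℂ).re := by
    rw [hbdef, inner_sub_left, ContinuousLinearMap.adjoint_inner_left, hEE,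
      Complex.sub_re, Complex.ofReal_re]
  have hbre2 : (b.re) ^ 2 ≤ Complex.normSq b := by
    rw [Complex.normSq_apply]
    nlinarith [sq_nonneg b.im]
  -- conclude
  have hfinal : ‖M x₀ - s ζ₀ (E x₀)‖ ^ 2 ≤ 0 := by
    have hns := norm_sub_sq (𝕜 := ℂ) (M x₀) (s ζ₀ (E x₀))
    have hre : RCLike.re ⟪M x₀, s ζ₀ (E x₀)⟫_ℂ = (⟪M x₀, s ζ₀ (E x₀)⟫_ℂ).re := rfl
    rw [hre] at hns
    rw [hns]
    have h5 : (‖E x₀‖ ^ 2 - (⟪M x₀, s ζ₀ (E x₀)⟫_ℂ).re) ^ 2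
        ≤ (‖E x₀‖ ^ 2 - ‖M x₀‖ ^ 2) * (‖E x₀‖ ^ 2 - ‖s ζ₀ (E x₀)‖ ^ 2) := by
      rw [hbre] at hbre2
      exact le_trans hbre2 hnb
    have h6 : (‖E x₀‖ ^ 2 - ‖M x₀‖ ^ 2) * (‖E x₀‖ ^ 2 - ‖s ζ₀ (E x₀)‖ ^ 2)
        ≤ ((‖E x₀‖ ^ 2 - ‖M x₀‖ ^ 2 + (‖E x₀‖ ^ 2 - ‖s ζ₀ (E x₀)‖ ^ 2)) / 2) ^ 2 := by
      nlinarith [sq_nonneg ((‖E x₀‖ ^ 2 - ‖M x₀‖ ^ 2) - (‖E x₀‖ ^ 2 - ‖s ζ₀ (E x₀)‖ ^ 2))]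
    have h7 : ‖E x₀‖ ^ 2 - (⟪M x₀, s ζ₀ (E x₀)⟫_ℂ).re
        ≤ (‖E x₀‖ ^ 2 - ‖M x₀‖ ^ 2 + (‖E x₀‖ ^ 2 - ‖s ζ₀ (E x₀)‖ ^ 2)) / 2 := by
      nlinarith [h5, h6, hem, hsee,
        sq_nonneg ((‖E x₀‖ ^ 2 - (⟪M x₀, s ζ₀ (E x₀)⟫_ℂ).re)
          + (‖E x₀‖ ^ 2 - ‖M x₀‖ ^ 2 + (‖E x₀‖ ^ 2 - ‖s ζ₀ (E x₀)‖ ^ 2)) / 2)]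
    linarith [h7]
  have h0 : M x₀ - s ζ₀ (E x₀) = 0 := by
    have := sq_nonneg ‖M x₀ - s ζ₀ (E x₀)‖
    have hz : ‖M x₀ - s ζ₀ (E x₀)‖ ^ 2 = 0 := le_antisymm hfinal this
    have : ‖M x₀ - s ζ₀ (E x₀)‖ = 0 := by
      nlinarith [norm_nonneg (M x₀ - s ζ₀ (E x₀))]
    exact norm_eq_zero.mp this
  have := sub_eq_zero.mp h0
  exact this.symm
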